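/- The full subcategory of star-shaped weak transition systems is a coreflective subcategory of the coslice category {ι}↓WTS: for every object ({ι} → X), the restriction C_ι(X) of X to its ι-reachable states (with all actions and with the transitions whose initial state is reachable from ι) is a star-shaped weak transition system, and every map from a star-shaped weak transition system ({ι} → Y) to ({ι} → X) in the coslice category factors uniquely through the inclusion C_ι(X) → X. -/

import Mathlib

/-- A weak transition system over a set `Lbl` of labels. -/
structure WTS (Lbl : Type*) where
  /-- states -/
  S : Type*
  /-- actions -/
  L : Type*
  /-- labelling map -/
  μ : L → Lbl
  /-- the transitions, labelled by nonempty lists of actions -/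
  T : S → List L → S → Prop
  nonempty_label : ∀ {α l β}, T α l β → l ≠ []
  /-- Multiset axiom -/
  multiset : ∀ {α l l' β}, T α l β → l.Perm l' → T α l' β
  /-- Patching axiom -/
  patching : ∀ {α β ν₁ ν₂ : S} {l₁ l₂ l₃ : List L}, l₁ ≠ [] → l₂ ≠ [] → l₃ ≠ [] →
    T α (l₁ ++ l₂ ++ l₃) β → T α l₁ ν₁ → T ν₁ (l₂ ++ l₃) β →
    T α (l₁ ++ l₂) ν₂ → T ν₂ l₃ β → T ν₁ l₂ ν₂

/-- Reachability of a state from a state `ι`. -/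
def WTS.reachable {Lbl : Type*} (X : WTS Lbl) (ι α : X.S) : Prop :=
  Relation.ReflTransGen (fun a b => ∃ l, X.T a l b) ι α

/-- A morphism of weak transition systems. -/
structure WTSHom {Lbl : Type*} (Y X : WTS Lbl) where
  /-- map on states -/
  fs : Y.S → X.S
  /-- map on actions -/
  fa : Y.L → X.L
  label : ∀ a, X.μ (fa a) = Y.μ a
  map_T : ∀ {α l β}, Y.T α l β → X.T (fs α) (l.map fa) (fs β)

/-- Composition of morphisms of weak transition systems, `f.comp g` being "`g` then `f`". -/
def WTSHom.comp {Lbl : Type*} {Z Y X : WTS Lbl} (f : WTSHom Y X) (g : WTSHom Z Y) :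
    WTSHom Z X where
  fs := f.fs ∘ g.fs
  fa := f.fa ∘ g.fa
  label a := by simp [f.label, g.label]
  map_T h := by simpa [List.map_map] using f.map_T (g.map_T h)

/-- A pointed weak transition system `(X, ι)` is star-shaped when every state is
reachable from `ι`. -/
def StarShaped {Lbl : Type*} (X : WTS Lbl) (x : X.S) : Prop := ∀ s, X.reachable x s

/-- `C_ι(X)`: the restriction of `X` to its `ι`-reachable states, with all the actions
of `X` and the transitions of `X` whose initial state is reachable from `ι`. -/
def WTS.restrictReachable {Lbl : Type*} (X : WTS Lbl) (x : X.S) : WTS Lbl where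
  S := {s : X.S // X.reachable x s}
  L := X.L
  μ := X.μ
  T a l b := X.T a.1 l b.1
  nonempty_label h := X.nonempty_label h
  multiset h p := X.multiset h p
  patching h1 h2 h3 t t1 t2 t3 t4 := X.patching h1 h2 h3 t t1 t2 t3 t4

/-- The canonical state of `C_ι(X)` corresponding to `ι`. -/
def WTS.restrictReachablePoint {Lbl : Type*} (X : WTS Lbl) (x : X.S) :
    (X.restrictReachable x).S := ⟨x, Relation.ReflTransGen.refl⟩

/-- The inclusion `C_ι(X) → X`. -/
def WTS.restrictReachableIncl {Lbl : Type*} (X : WTS Lbl) (x : X.S) :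
    WTSHom (X.restrictReachable x) X where
  fs := Subtype.val
  fa := id
  label _ := rfl
  map_T h := by erw [List.map_id]; exact h

/-- Star-shaped weak transition systems form a coreflective subcategory of the coslice
category `{ι}↓WTS`: `C_ι(X)` is star-shaped, and every map from a star-shaped pointed
weak transition system `(Y, yι)` to `(X, xι)` preserving the base points factors
uniquely through the inclusion `C_ι(X) → X` by a base-point preserving map. -/
theorem starShaped_coreflective {Lbl : Type*} (X : WTS Lbl) (xι : X.S) :
    StarShaped (X.restrictReachable xι) (X.restrictReachablePoint xι) ∧
    ∀ (Y : WTS Lbl) (yι : Y.S), StarShaped Y yι →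
      ∀ f : WTSHom Y X, f.fs yι = xι →
        ∃! g : WTSHom Y (X.restrictReachable xι),
          g.fs yι = X.restrictReachablePoint xι ∧
          (X.restrictReachableIncl xι).comp g = f := by
  constructor
  · intro s
    obtain ⟨a, ha⟩ := s
    induction ha with
    | refl => exact Relation.ReflTransGen.refl
    | tail hb hstep ih =>
        rename_i b c
        obtain ⟨l, hl⟩ := hstep
        have step : (X.restrictReachable xι).T ⟨b, hb⟩ l
            ⟨c, Relation.ReflTransGen.tail hb ⟨l, hl⟩⟩ := hl
        exact Relation.ReflTransGen.tail
          (show Relation.ReflTransGen (fun a b => ∃ l, (X.restrictReachable xι).T a l b)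
            (X.restrictReachablePoint xι) ⟨b, hb⟩ from ih) ⟨l, step⟩
  · intro Y yι hY f hf
    have hreach : ∀ y : Y.S, X.reachable xι (f.fs y) := by
      intro y
      rw [← hf]
      exact Relation.ReflTransGen.lift (r := fun a b => ∃ l, Y.T a l b)
        (p := fun a b => ∃ l, X.T a l b) f.fs
        (fun a b ⟨l, hl⟩ => show ∃ l', X.T (f.fs a) l' (f.fs b) from
          ⟨l.map f.fa, f.map_T hl⟩) _ _ (hY y)
    refine ⟨⟨fun y => ⟨f.fs y, hreach y⟩, f.fa, f.label, fun h => f.map_T h⟩, ⟨?_, ?_⟩, ?_⟩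
    · exact Subtype.ext hf
    · rfl
    · rintro ⟨gs, ga, gl, gm⟩ ⟨h1, h2⟩
      cases f
      injection h2 with hs ha
      simp only [WTSHom.mk.injEq]
      congr 1
      · funext y
        exact Subtype.ext (congrFun hs y)
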